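/- Let s > 0, let f : ℝ → ℝ be defined by f(x) = Σ_{j=3}^∞ 2^{−js} cos((11/8)·2^j·x), and for n ≥ 3 set λ_n = 1 + 1/n and τ_n = 8nπ/(11·2^n). Then for every real p with 1 ≤ p < ∞ and every n ≥ 3: 2^{ns} · ( ∫₀^{2π} |f(x − λ_n τ_n) − f(x − τ_n)|^p dx )^{1/p} ≥ (2π)^{1/p}, even though τ_n → 0⁺ and λ_n → 1 as n → ∞. -/

import Mathlib

open Real Filter

section Aux

lemma aux_int_cos_zero (m : ℤ) (hm : (m:ℝ) ≠ 0) (b : ℝ) :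
    ∫ x in (0:ℝ)..(2*π), Real.cos ((m:ℝ) * x + b) = 0 := by
  rw [intervalIntegral.integral_comp_mul_add Real.cos hm b]
  simp only [integral_cos, mul_zero, zero_add, smul_eq_mul]
  have : Real.sin ((m:ℝ) * (2*π) + b) = Real.sin b := by
    rw [add_comm, Real.sin_add_int_mul_two_pi]
  rw [this]; ring

lemma aux_prod (c N b x : ℝ) :
    Real.cos (c*x+b) * Real.cos (N*x)
      = (Real.cos ((c+N)*x+b) + Real.cos ((c-N)*x+b))/2 := by
  have h1 : (c+N)*x+b = (c*x+b) + N*x := by ring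
  have h2 : (c-N)*x+b = (c*x+b) - N*x := by ring
  rw [h1, h2, Real.cos_add (c*x+b) (N*x), Real.cos_sub (c*x+b) (N*x)]; ring

lemma aux_ii (a b : ℝ) :
    IntervalIntegrable (fun x => Real.cos (a*x+b)) MeasureTheory.volume 0 (2*π) :=
  (Real.continuous_cos.comp ((continuous_const.mul continuous_id).add
    continuous_const)).intervalIntegrable _ _

lemma aux_ortho (c N b : ℝ) (m1 m2 : ℤ) (h1 : (m1:ℝ) = c + N) (h2 : (m2:ℝ) = c - N)
    (hm1 : (m1:ℝ) ≠ 0) (hm2 : (m2:ℝ) ≠ 0) :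
    ∫ x in (0:ℝ)..(2*π), Real.cos (c*x+b) * Real.cos (N*x) = 0 := by
  have : ∀ x ∈ Set.uIcc (0:ℝ) (2*π), Real.cos (c*x+b) * Real.cos (N*x)
      = (Real.cos ((c+N)*x+b) + Real.cos ((c-N)*x+b))/2 := fun x _ => aux_prod c N b x
  rw [intervalIntegral.integral_congr this, intervalIntegral.integral_div,
    intervalIntegral.integral_add (aux_ii _ _) (aux_ii _ _), ← h1, ← h2,
    aux_int_cos_zero m1 hm1, aux_int_cos_zero m2 hm2]
  norm_num

lemma aux_diag (N b : ℝ) (m : ℤ) (h : (m:ℝ) = 2*N) (hm : (m:ℝ) ≠ 0) :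
    ∫ x in (0:ℝ)..(2*π), Real.cos (N*x+b) * Real.cos (N*x) = π * Real.cos b := by
  have : ∀ x ∈ Set.uIcc (0:ℝ) (2*π), Real.cos (N*x+b) * Real.cos (N*x)
      = (Real.cos ((N+N)*x+b) + Real.cos ((N-N)*x+b))/2 := fun x _ => aux_prod N N b x
  have h2 : (N:ℝ) + N = (m:ℝ) := by rw [h]; ring
  rw [intervalIntegral.integral_congr this, intervalIntegral.integral_div,
    intervalIntegral.integral_add (aux_ii _ _) (aux_ii _ _), h2,
    aux_int_cos_zero m hm b]
  have : ∀ x ∈ Set.uIcc (0:ℝ) (2*π), Real.cos ((N-N)*x+b) = Real.cos b := by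
    intro x _; norm_num
  rw [intervalIntegral.integral_congr this, intervalIntegral.integral_const]
  simp; ring

lemma aux_cos_nat_pi (n : ℕ) : Real.cos ((n:ℝ)*π) = (-1:ℝ)^n := by
  simpa using Real.cos_nat_mul_pi_sub 0 n

end Aux

set_option maxHeartbeats 1600000 in
/-- For `s > 0`, `f(x) = Σ_{j=3}^∞ 2^{-js} cos((11/8)·2^j·x)`, `λ_n = 1 + 1/n` and
`τ_n = 8nπ/(11·2^n)`: for every `1 ≤ p < ∞` and `n ≥ 3`,
`2^{ns} ‖f(·-λ_nτ_n) - f(·-τ_n)‖_{L^p(0,2π)} ≥ (2π)^{1/p}`, even though `τ_n → 0⁺`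
and `λ_n → 1`. -/
theorem stmt_12 (s : ℝ) (hs : 0 < s) (f : ℝ → ℝ)
    (hf : ∀ x : ℝ, f x = ∑' j : ℕ,
      (2 : ℝ) ^ (-(((j : ℝ) + 3)) * s) * Real.cos ((11 / 8) * 2 ^ (j + 3) * x))
    (lam τ : ℕ → ℝ)
    (hlam : ∀ n, lam n = 1 + 1 / (n : ℝ))
    (hτ : ∀ n, τ n = 8 * (n : ℝ) * π / (11 * 2 ^ n)) :
    (∀ p : ℝ, 1 ≤ p → ∀ n : ℕ, 3 ≤ n →
      (2 : ℝ) ^ ((n : ℝ) * s)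
          * (∫ x in (0:ℝ)..(2 * π), |f (x - lam n * τ n) - f (x - τ n)| ^ p) ^ (1 / p)
        ≥ (2 * π) ^ (1 / p)) ∧
    Tendsto τ atTop (nhdsWithin 0 (Set.Ioi 0)) ∧
    Tendsto lam atTop (nhds 1) := by
  have h0le : (0:ℝ) ≤ 2*π := by positivity
  have h2pi : (0:ℝ) < 2*π := by positivity
  set a : ℕ → ℝ := fun j => (2:ℝ) ^ (-(((j:ℝ)+3)) * s) with ha_def
  have apos : ∀ j, 0 < a j := fun j => Real.rpow_pos_of_pos two_pos _
  have hsumA : Summable a := by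
    have hlt : (2:ℝ)^(-s) < 1 :=
      Real.rpow_lt_one_of_one_lt_of_neg one_lt_two (neg_lt_zero.mpr hs)
    have hge : (0:ℝ) ≤ (2:ℝ)^(-s) := (Real.rpow_pos_of_pos two_pos _).le
    have h1 : Summable (fun j : ℕ => (2:ℝ)^((-3:ℝ)*s) * ((2:ℝ)^(-s))^j) :=
      (summable_geometric_of_lt_one hge hlt).mul_left _
    refine h1.congr fun j => ?_
    rw [← Real.rpow_natCast ((2:ℝ)^(-s)) j, ← Real.rpow_mul (by norm_num),
      ← Real.rpow_add two_pos]
    congr 1; ring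
  set c : ℕ → ℝ := fun j => (11/8) * 2^(j+3) with hc_def
  have hfc : Continuous f := by
    have hfe : f = fun x => ∑' j : ℕ, a j * Real.cos (c j * x) := funext hf
    rw [hfe]
    refine continuous_tsum (fun j => continuous_const.mul
      (Real.continuous_cos.comp (continuous_const.mul continuous_id))) hsumA fun j x => ?_
    rw [norm_mul, Real.norm_eq_abs, Real.norm_eq_abs, abs_of_pos (apos j)]
    exact mul_le_of_le_one_right (apos j).le (Real.abs_cos_le_one _)
  have fbd : ∀ y, |f y| ≤ ∑' j, a j := by
    intro y
    rw [hf y]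
    have hsum' : Summable fun j => a j * Real.cos (c j * y) := by
      refine Summable.of_norm (hsumA.of_nonneg_of_le (fun j => norm_nonneg _) fun j => ?_)
      rw [norm_mul, Real.norm_eq_abs, Real.norm_eq_abs, abs_of_pos (apos j)]
      exact mul_le_of_le_one_right (apos j).le (Real.abs_cos_le_one _)
    calc |∑' j, a j * Real.cos (c j * y)| ≤ ∑' j, ‖a j * Real.cos (c j * y)‖ :=
          norm_tsum_le_tsum_norm hsum'.norm
      _ ≤ ∑' j, a j := by
          refine Summable.tsum_le_tsum (fun j => ?_) hsum'.norm hsumA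
          rw [norm_mul, Real.norm_eq_abs, Real.norm_eq_abs, abs_of_pos (apos j)]
          exact mul_le_of_le_one_right (apos j).le (Real.abs_cos_le_one _)
  refine ⟨?_, ?_, ?_⟩
  · intro p hp n hn
    obtain ⟨k, rfl⟩ : ∃ k, n = k + 3 := ⟨n - 3, (Nat.sub_add_cancel hn).symm⟩
    set L := lam (k+3) with hL
    set T := τ (k+3) with hT
    set g : ℝ → ℝ := fun x => f (x - L*T) - f (x - T) with hg_def
    have gcont : Continuous g :=
      (hfc.comp (continuous_sub_right _)).sub (hfc.comp (continuous_sub_right _))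
    set b1 : ℕ → ℝ := fun j => -(c j * (L*T)) with hb1
    set b2 : ℕ → ℝ := fun j => -(c j * T) with hb2
    set F : ℕ → ℝ → ℝ := fun j x =>
      (a j * Real.cos (c j * x + b1 j) - a j * Real.cos (c j * x + b2 j))
        * Real.cos (c k * x) with hF_def
    have hsum' : ∀ (u : ℕ → ℝ), Summable fun j => a j * Real.cos (u j) := by
      intro u
      refine Summable.of_norm (hsumA.of_nonneg_of_le (fun j => norm_nonneg _) fun j => ?_)
      rw [norm_mul, Real.norm_eq_abs, Real.norm_eq_abs, abs_of_pos (apos j)]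
      exact mul_le_of_le_one_right (apos j).le (Real.abs_cos_le_one _)
    have hgF : ∀ x, g x * Real.cos (c k * x) = ∑' j, F j x := by
      intro x
      have e1 : f (x - L*T) = ∑' j, a j * Real.cos (c j * x + b1 j) := by
        rw [hf]; refine tsum_congr fun j => ?_; congr 1
        simp only [hc_def, hb1]; ring
      have e2 : f (x - T) = ∑' j, a j * Real.cos (c j * x + b2 j) := by
        rw [hf]; refine tsum_congr fun j => ?_; congr 1
        simp only [hc_def, hb2]; ring
      rw [hg_def]
      simp only
      rw [e1, e2, ← Summable.tsum_sub (hsum' _) (hsum' _), ← tsum_mul_right]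
    have ccos : ∀ (u v : ℝ), Continuous fun x : ℝ => Real.cos (u*x+v) := fun u v =>
      Real.continuous_cos.comp ((continuous_const.mul continuous_id).add continuous_const)
    have ccosk : Continuous fun x : ℝ => Real.cos (c k * x) :=
      Real.continuous_cos.comp (continuous_const.mul continuous_id)
    have Fcont : ∀ j, Continuous (F j) := fun j =>
      ((continuous_const.mul (ccos (c j) (b1 j))).sub
        (continuous_const.mul (ccos (c j) (b2 j)))).mul ccosk
    have Fbound : ∀ j x, ‖F j x‖ ≤ 2 * a j := by
      intro j x
      have hcc : |a j * Real.cos (c j * x + b1 j)| ≤ a j := by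
        rw [abs_mul, abs_of_pos (apos j)]
        exact mul_le_of_le_one_right (apos j).le (Real.abs_cos_le_one _)
      have hcc2 : |a j * Real.cos (c j * x + b2 j)| ≤ a j := by
        rw [abs_mul, abs_of_pos (apos j)]
        exact mul_le_of_le_one_right (apos j).le (Real.abs_cos_le_one _)
      have hd : |a j * Real.cos (c j * x + b1 j) - a j * Real.cos (c j * x + b2 j)|
          ≤ 2 * a j := by
        calc _ ≤ |a j * Real.cos (c j * x + b1 j)| + |a j * Real.cos (c j * x + b2 j)| :=
              abs_sub _ _
          _ ≤ 2 * a j := by linarith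
      rw [Real.norm_eq_abs, hF_def]
      simp only
      rw [abs_mul]
      calc _ ≤ (2 * a j) * 1 := by
            refine mul_le_mul hd (Real.abs_cos_le_one _) (abs_nonneg _) (by positivity)
        _ = 2 * a j := mul_one _
    have hFint : ∀ j, MeasureTheory.IntegrableOn (F j) (Set.Ioc (0:ℝ) (2*π)) := fun j =>
      (Fcont j).integrableOn_Ioc
    have hvol : (MeasureTheory.volume (Set.Ioc (0:ℝ) (2*π))).toReal = 2*π := by
      rw [Real.volume_Ioc, sub_zero, ENNReal.toReal_ofReal h0le]
    have hFsum : Summable fun j => ∫ x in Set.Ioc (0:ℝ) (2*π), ‖F j x‖ := by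
      refine Summable.of_nonneg_of_le
        (fun j => MeasureTheory.integral_nonneg fun x => norm_nonneg _)
        (fun j => ?_) ((hsumA.mul_left 2).mul_left (2*π))
      calc (∫ x in Set.Ioc (0:ℝ) (2*π), ‖F j x‖)
          ≤ ∫ _x in Set.Ioc (0:ℝ) (2*π), 2 * a j :=
            MeasureTheory.integral_mono (hFint j).norm
              (MeasureTheory.integrable_const _) (fun x => Fbound j x)
        _ = (2*π) * (2 * a j) := by
            rw [MeasureTheory.setIntegral_const, smul_eq_mul, MeasureTheory.measureReal_def, hvol]
    -- the key integral identity
    have hI : (∫ x in (0:ℝ)..(2*π), g x * Real.cos (c k * x))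
        = ∑' j, ∫ x in (0:ℝ)..(2*π), F j x := by
      have : ∀ x ∈ Set.uIcc (0:ℝ) (2*π), g x * Real.cos (c k * x) = ∑' j, F j x :=
        fun x _ => hgF x
      rw [intervalIntegral.integral_congr this, intervalIntegral.integral_of_le h2pi.le,
        ← MeasureTheory.integral_tsum_of_summable_integral_norm hFint hFsum]
      exact tsum_congr fun j => (intervalIntegral.integral_of_le h2pi.le).symm
    have hsplit : ∀ j, (∫ x in (0:ℝ)..(2*π), F j x)
        = a j * (∫ x in (0:ℝ)..(2*π), Real.cos (c j * x + b1 j) * Real.cos (c k * x))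
          - a j * (∫ x in (0:ℝ)..(2*π), Real.cos (c j * x + b2 j) * Real.cos (c k * x)) := by
      intro j
      have : ∀ x ∈ Set.uIcc (0:ℝ) (2*π), F j x
          = a j * (Real.cos (c j * x + b1 j) * Real.cos (c k * x))
            - a j * (Real.cos (c j * x + b2 j) * Real.cos (c k * x)) := by
        intro x _; simp only [hF_def]; ring
      rw [intervalIntegral.integral_congr this, intervalIntegral.integral_sub,
        intervalIntegral.integral_const_mul, intervalIntegral.integral_const_mul]
      · exact (continuous_const.mul ((ccos (c j) (b1 j)).mul ccosk)).intervalIntegrable _ _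
      · exact (continuous_const.mul ((ccos (c j) (b2 j)).mul ccosk)).intervalIntegrable _ _
    have hcast : ∀ j : ℕ, (c j : ℝ) = ((11 * 2^j : ℤ) : ℝ) := by
      intro j; simp only [hc_def]; push_cast; rw [pow_add]; norm_num; ring
    have hzero : ∀ j, j ≠ k → (∫ x in (0:ℝ)..(2*π), F j x) = 0 := by
      intro j hj
      have horth : ∀ b : ℝ,
          (∫ x in (0:ℝ)..(2*π), Real.cos (c j * x + b) * Real.cos (c k * x)) = 0 := by
        intro b
        refine aux_ortho (c j) (c k) b (11*2^j + 11*2^k) (11*2^j - 11*2^k) ?_ ?_ ?_ ?_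
        · rw [hcast j, hcast k]; push_cast; ring
        · rw [hcast j, hcast k]; push_cast; ring
        · have : ((11*2^j + 11*2^k : ℤ) : ℝ) = 11*2^j + 11*2^k := by push_cast; ring
          rw [this]; positivity
        · rw [Int.cast_ne_zero, sub_ne_zero]
          intro hEq
          apply hj
          have h2 : (2:ℤ)^j = 2^k := by
            have := mul_left_cancel₀ (by norm_num : (11:ℤ) ≠ 0) hEq
            exact this
          have hN : (2:ℕ)^j = 2^k := by exact_mod_cast h2
          exact Nat.pow_right_injective (by norm_num) hN
      rw [hsplit j, horth, horth]; ring
    have hckT : c k * T = ((k:ℝ)+3) * π := by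
      have hpow : (2:ℝ)^(k+3) ≠ 0 := by positivity
      rw [hT, hτ]
      simp only [hc_def]
      push_cast
      field_simp
    have hckLT : c k * (L*T) = ((k:ℝ)+4) * π := by
      have hk3 : ((k:ℝ)+3) ≠ 0 := by positivity
      have : c k * (L*T) = L * (c k * T) := by ring
      rw [this, hckT, hL, hlam]
      push_cast
      field_simp
      ring
    have hcosb1 : Real.cos (b1 k) = (-1:ℝ)^(k+4) := by
      rw [hb1]
      simp only
      rw [Real.cos_neg, hckLT]
      have : ((k:ℝ)+4) = ((k+4 : ℕ) : ℝ) := by push_cast; ring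
      rw [this, aux_cos_nat_pi]
    have hcosb2 : Real.cos (b2 k) = (-1:ℝ)^(k+3) := by
      rw [hb2]
      simp only
      rw [Real.cos_neg, hckT]
      have : ((k:ℝ)+3) = ((k+3 : ℕ) : ℝ) := by push_cast; ring
      rw [this, aux_cos_nat_pi]
    have hmain : (∫ x in (0:ℝ)..(2*π), F k x) = 2*π*(a k)*(-1:ℝ)^k := by
      have hdg : ∀ b : ℝ,
          (∫ x in (0:ℝ)..(2*π), Real.cos (c k * x + b) * Real.cos (c k * x))
            = π * Real.cos b := by
        intro b
        refine aux_diag (c k) b (22*2^k) ?_ ?_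
        · rw [hcast k]; push_cast; ring
        · have : ((22*2^k : ℤ) : ℝ) = 22*2^k := by push_cast; ring
          rw [this]; positivity
      rw [hsplit k, hdg, hdg, hcosb1, hcosb2, pow_add, pow_add]
      ring
    have hIval : (∫ x in (0:ℝ)..(2*π), g x * Real.cos (c k * x)) = 2*π*(a k)*(-1:ℝ)^k := by
      rw [hI, tsum_eq_single k hzero, hmain]
    -- lower bound on ∫ |g|
    have habsI : 2*π*(a k) ≤ ∫ x in (0:ℝ)..(2*π), |g x| := by
      have h1 : |∫ x in (0:ℝ)..(2*π), g x * Real.cos (c k * x)| = 2*π*(a k) := by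
        rw [hIval, abs_mul, abs_pow, abs_neg, abs_one, one_pow, mul_one,
          abs_of_pos (by positivity : (0:ℝ) < 2*π*(a k))]
      calc 2*π*(a k) = |∫ x in (0:ℝ)..(2*π), g x * Real.cos (c k * x)| := h1.symm
        _ ≤ ∫ x in (0:ℝ)..(2*π), |g x * Real.cos (c k * x)| :=
            intervalIntegral.abs_integral_le_integral_abs h2pi.le
        _ ≤ ∫ x in (0:ℝ)..(2*π), |g x| := by
            refine intervalIntegral.integral_mono_on h2pi.le
              ((gcont.mul ccosk).abs.intervalIntegrable _ _)
              (gcont.abs.intervalIntegrable _ _) fun x _ => ?_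
            rw [abs_mul]
            exact mul_le_of_le_one_right (abs_nonneg _) (Real.abs_cos_le_one _)
    -- Hölder
    set J : ℝ := ∫ x in (0:ℝ)..(2*π), |g x| ^ p with hJ_def
    have hJnn : 0 ≤ J := by
      rw [hJ_def]
      refine intervalIntegral.integral_nonneg h2pi.le fun x _ => ?_
      positivity
    have hHold : (∫ x in (0:ℝ)..(2*π), |g x|) ≤ (2*π)^(1-1/p) * J^(1/p) := by
      rcases eq_or_lt_of_le hp with rfl | hp1
      · have : ∀ x ∈ Set.uIcc (0:ℝ) (2*π), |g x| ^ (1:ℝ) = |g x| := fun x _ =>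
          Real.rpow_one _
        rw [hJ_def, intervalIntegral.integral_congr this]
        norm_num
      · have hpq : p.HolderConjugate (p/(p-1)) := Real.HolderConjugate.conjExponent hp1
        haveI : Fact (MeasureTheory.volume (Set.Ioc (0:ℝ) (2*π)) < ⊤) :=
          ⟨measure_Ioc_lt_top⟩
        have mem1 : MeasureTheory.MemLp (fun x => |g x|) (ENNReal.ofReal p)
            (MeasureTheory.volume.restrict (Set.Ioc (0:ℝ) (2*π))) := by
          refine MeasureTheory.MemLp.of_bound
            gcont.abs.aestronglyMeasurable.restrict (2 * ∑' j, a j) ?_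
          filter_upwards with x
          rw [Real.norm_eq_abs, abs_abs]
          calc |g x| ≤ |f (x - L*T)| + |f (x - T)| := abs_sub _ _
            _ ≤ (∑' j, a j) + (∑' j, a j) := add_le_add (fbd _) (fbd _)
            _ = 2 * ∑' j, a j := by ring
        have mem2 : MeasureTheory.MemLp (fun _ : ℝ => (1:ℝ)) (ENNReal.ofReal (p/(p-1)))
            (MeasureTheory.volume.restrict (Set.Ioc (0:ℝ) (2*π))) :=
          MeasureTheory.memLp_const _
        have hH := MeasureTheory.integral_mul_le_Lp_mul_Lq_of_nonneg
          (μ := MeasureTheory.volume.restrict (Set.Ioc (0:ℝ) (2*π))) hpq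
          (Filter.Eventually.of_forall fun x => abs_nonneg (g x))
          (Filter.Eventually.of_forall fun _ => zero_le_one) mem1 mem2
        simp only [mul_one, Real.one_rpow] at hH
        have e1 : (∫ x in (0:ℝ)..(2*π), |g x|)
            = ∫ x in Set.Ioc (0:ℝ) (2*π), |g x| := intervalIntegral.integral_of_le h2pi.le
        have e2 : J = ∫ x in Set.Ioc (0:ℝ) (2*π), |g x| ^ p :=
          intervalIntegral.integral_of_le h2pi.le
        have e3 : (∫ _x in Set.Ioc (0:ℝ) (2*π), (1:ℝ)) = 2*π := by
          rw [MeasureTheory.setIntegral_const, smul_eq_mul, mul_one, MeasureTheory.measureReal_def,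
            Real.volume_Ioc, sub_zero, ENNReal.toReal_ofReal h0le]
        rw [e1, e2]
        have e4 : 1 - 1/p = 1/(p/(p-1)) := by
          have hpne : p ≠ 0 := by positivity
          have hp1ne : p - 1 ≠ 0 := sub_ne_zero.mpr (ne_of_gt hp1)
          rw [one_div_div]
          field_simp
        rw [e4]
        calc (∫ x in Set.Ioc (0:ℝ) (2*π), |g x|)
            ≤ (∫ x in Set.Ioc (0:ℝ) (2*π), |g x| ^ p)^(1/p)
              * (∫ _x in Set.Ioc (0:ℝ) (2*π), (1:ℝ))^(1/(p/(p-1))) := hH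
          _ = (2*π)^(1/(p/(p-1))) * (∫ x in Set.Ioc (0:ℝ) (2*π), |g x| ^ p)^(1/p) := by
              rw [e3]; ring
    -- conclude
    have hp0 : 0 < p := lt_of_lt_of_le zero_lt_one hp
    have hkey : (2*π)^(1/p) * a k ≤ J^(1/p) := by
      have hcomb : (2*π)^(1-1/p) * ((2*π)^(1/p) * a k) ≤ (2*π)^(1-1/p) * J^(1/p) := by
        have : (2*π)^(1-1/p) * ((2*π)^(1/p) * a k) = (2*π) * a k := by
          rw [← mul_assoc, ← Real.rpow_add h2pi]
          norm_num
        rw [this]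
        calc (2*π) * a k = 2*π*(a k) := by ring
          _ ≤ ∫ x in (0:ℝ)..(2*π), |g x| := habsI
          _ ≤ (2*π)^(1-1/p) * J^(1/p) := hHold
      exact le_of_mul_le_mul_left hcomb (Real.rpow_pos_of_pos h2pi _)
    have hak : (2:ℝ)^((((k:ℕ)+3 : ℕ):ℝ) * s) * a k = 1 := by
      rw [ha_def]
      simp only
      rw [← Real.rpow_add two_pos]
      push_cast
      ring_nf
      norm_num
    calc (2:ℝ)^((((k:ℕ)+3 : ℕ):ℝ) * s) * J^(1/p)
        ≥ (2:ℝ)^((((k:ℕ)+3 : ℕ):ℝ) * s) * ((2*π)^(1/p) * a k) := by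
          exact mul_le_mul_of_nonneg_left hkey (Real.rpow_nonneg (by norm_num) _)
      _ = (2*π)^(1/p) * ((2:ℝ)^((((k:ℕ)+3 : ℕ):ℝ) * s) * a k) := by ring
      _ = (2*π)^(1/p) := by rw [hak, mul_one]
  · rw [tendsto_nhdsWithin_iff]
    constructor
    · have h1 : Tendsto (fun n : ℕ => (n:ℝ) * (1/2)^n) atTop (nhds 0) :=
        tendsto_self_mul_const_pow_of_lt_one (by norm_num) (by norm_num)
      have h2 : Tendsto (fun n : ℕ => (8*π/11) * ((n:ℝ) * (1/2)^n)) atTop (nhds 0) := by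
        simpa using h1.const_mul (8*π/11)
      refine h2.congr fun n => ?_
      rw [hτ]
      rw [div_pow, one_pow]
      have : (2:ℝ)^n ≠ 0 := by positivity
      field_simp
    · filter_upwards [eventually_ge_atTop 1] with n hn
      rw [hτ, Set.mem_Ioi]
      have hn' : (0:ℝ) < n := by exact_mod_cast hn
      positivity
  · have h1 : Tendsto (fun n : ℕ => 1 + 1/(n:ℝ)) atTop (nhds 1) := by
      simpa using tendsto_one_div_atTop_nhds_zero_nat.const_add (1:ℝ)
    exact h1.congr fun n => (hlam n).symm
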